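/- arXiv:1708.05845 — 3 statements merged into one kernel-verified Lean document; each statement's English description precedes it below -/
import Mathlib

section
/- Let G be a unicyclic multigraph with parallel classes of sizes t_1,…,t_{r'} on the cycle (cycle length m) and t_{m+1},…,t_{m+r''} off the cycle. The number of spanning trees of G equals (∏_{j=m+1}^{m+r''} t_j) · (∏_{i=1}^{r'} t_i) · (∑_{i=1}^{r'} 1/t_i + (m − r')). -/
/-- A subset `T` of the edges of a multigraph (given by its endpoint map `ends`)
is the edge set of a spanning tree. -/
def IsSpanningTree {V E : Type} (ends : E → Sym2 V) (T : Finset E) : Prop :=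
  Set.InjOn ends T ∧ (∀ e ∈ T, ¬ (ends e).IsDiag) ∧
    (SimpleGraph.fromEdgeSet (ends '' T)).IsTree

/-- Edge type of the unicyclic multigraph `U^r_{n,m}`: parallel classes on the `m`
cycle positions (sizes `t i`), parallel bridge classes (sizes `u j`), and `v'`
single bridges. -/
abbrev UniE (m r'' v' : ℕ) (t : Fin m → ℕ) (u : Fin r'' → ℕ) : Type :=
  (Σ i : Fin m, Fin (t i)) ⊕ (Σ j : Fin r'', Fin (u j)) ⊕ Fin v'

/-- Endpoint map: cycle classes join consecutive cycle vertices `c i, c (i+1 mod m)`,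
bridge classes have endpoints `bp j`, single bridges `sp a`. -/
def uniEnds {V : Type} (m r'' v' : ℕ) (t : Fin m → ℕ) (u : Fin r'' → ℕ)
    (c : Fin m → V) (bp : Fin r'' → Sym2 V) (sp : Fin v' → Sym2 V)
    (hm : 0 < m) : UniE m r'' v' t u → Sym2 V :=
  Sum.elim (fun e => s(c e.1, c ⟨(e.1.val + 1) % m, Nat.mod_lt _ hm⟩))
    (Sum.elim (fun e => bp e.1) sp)

/-- Endpoint pairs of the parallel classes. -/
def uniClassEnds {V : Type} (m r'' v' : ℕ)
    (c : Fin m → V) (bp : Fin r'' → Sym2 V) (sp : Fin v' → Sym2 V)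
    (hm : 0 < m) : (Fin m ⊕ Fin r'' ⊕ Fin v') → Sym2 V :=
  Sum.elim (fun i => s(c i, c ⟨(i.val + 1) % m, Nat.mod_lt _ hm⟩))
    (Sum.elim bp sp)

section Helpers
open SimpleGraph


lemma transfer_reachable {V : Type} {G G' : SimpleGraph V} {v w : V}
    (h1 : G'.Reachable v w)
    (h2 : ∀ a b : V, G.Adj a b → s(a, b) ≠ s(v, w) → G'.Adj a b)
    {x y : V} (h : G.Reachable x y) : G'.Reachable x y := by
  obtain ⟨p⟩ := h
  induction p with
  | nil => exact Reachable.refl _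
  | @cons a b z hab q ih =>
    refine Reachable.trans ?_ ih
    by_cases he : s(a, b) = s(v, w)
    · rw [Sym2.eq_iff] at he
      rcases he with ⟨rfl, rfl⟩ | ⟨rfl, rfl⟩
      · exact h1
      · exact h1.symm
    · exact (h2 a b hab he).reachable

lemma card_le_of_connected {V : Type} [Fintype V] {G : SimpleGraph V}
    (h : G.Connected) : Fintype.card V ≤ G.edgeSet.ncard + 1 := by
  classical
  have hne := h.nonempty
  inhabit V
  choose p hp using fun w : V => (h w default).exists_walk_length_eq_dist
  set d : V → ℕ := fun w => G.dist w default with hd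
  have hnil : ∀ w : V, w ≠ default → ¬(p w).Nil := fun w hw => Walk.not_nil_of_ne hw
  have hmem : ∀ w : V, w ≠ default → s(w, (p w).getVert 1) ∈ G.edgeSet :=
    fun w hw => ((p w).adj_snd (hnil w hw))
  have hstep : ∀ w : V, w ≠ default → d ((p w).getVert 1) + 1 ≤ d w := by
    intro w hw
    have h1 : G.dist ((p w).getVert 1) default ≤ (p w).tail.length := dist_le _
    have h2 : (p w).tail.length + 1 = (p w).length := Walk.length_tail_add_one (hnil w hw)
    have := hp w
    simp only [hd]
    omega
  have hpos : ∀ w : V, w ≠ default → 1 ≤ d w := by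
    intro w hw
    exact (h w default).pos_dist_of_ne hw
  have hinj : Set.InjOn (fun w => s(w, (p w).getVert 1)) {w : V | w ≠ default} := by
    intro a ha b hb hab
    simp only [Sym2.eq_iff] at hab
    rcases hab with ⟨rfl, -⟩ | ⟨h1, h2⟩
    · rfl
    · exfalso
      have da := hstep a ha
      have db := hstep b hb
      rw [← h1] at db
      rw [h2] at da
      omega
  have hfin : G.edgeSet.Finite := Set.toFinite _
  have hle : ({w : V | w ≠ default} : Set V).ncard ≤ G.edgeSet.ncard :=
    Set.ncard_le_ncard_of_injOn _ (fun a ha => hmem a ha) hinj hfin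
  have : ({w : V | w ≠ default} : Set V).ncard = Fintype.card V - 1 := by
    have : ({w : V | w ≠ default} : Set V) = {(default : V)}ᶜ := by
      ext w; simp
    rw [this, Set.ncard_eq_toFinset_card', Set.toFinset_compl, Set.toFinset_singleton,
      Finset.card_compl, Finset.card_singleton]
  have hc : 0 < Fintype.card V := Fintype.card_pos
  omega

lemma isTree_of_connected_of_card {V : Type} [Fintype V] {G : SimpleGraph V}
    (h : G.Connected) (hcard : G.edgeSet.ncard + 1 = Fintype.card V) : G.IsTree := by
  refine ⟨h, ?_⟩
  intro v p hp
  have hlen : 3 ≤ p.length := hp.three_le_length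
  have hedges : p.edges ≠ [] := by
    have := p.length_edges
    intro hnil
    rw [hnil] at this
    simp at this
    omega
  obtain ⟨e, he⟩ := List.exists_mem_of_ne_nil _ hedges
  induction e using Sym2.ind with
  | _ x y =>
    have hkey := adj_and_reachable_delete_edges_iff_exists_cycle.mpr ⟨v, p, hp, he⟩
    obtain ⟨hadj, hreach⟩ := hkey
    set G' := G \ fromEdgeSet {s(x, y)} with hG'
    have hconn' : G'.Connected := by
      have hnV : Nonempty V := h.nonempty
      refine Connected.mk fun a b => ?_
      refine transfer_reachable hreach ?_ (h a b)
      intro a b hab hne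
      change G'.Adj a b
      rw [hG', sdiff_adj]
      refine ⟨hab, ?_⟩
      rw [fromEdgeSet_adj]
      rintro ⟨h1, -⟩
      exact hne (by simpa using h1)
    have hE' : G'.edgeSet = G.edgeSet \ {s(x, y)} := by
      rw [hG', edgeSet_sdiff, edgeSet_fromEdgeSet, edgeSet_sdiff_sdiff_isDiag]
    have hmem : s(x, y) ∈ G.edgeSet := hadj
    have hle := card_le_of_connected hconn'
    rw [hE'] at hle
    have h1 : (G.edgeSet \ {s(x, y)}).ncard = G.edgeSet.ncard - 1 := by
      rw [Set.ncard_diff_singleton_of_mem hmem]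
    have h2 : 1 ≤ G.edgeSet.ncard := by
      have := Set.ncard_ne_zero_of_mem hmem (Set.toFinite _)
      omega
    omega

lemma mod_ne_self {i k m : ℕ} (hi : i < m) (hk0 : 0 < k) (hkm : k < m) :
    (i + k) % m ≠ i := by
  rcases Nat.lt_or_ge (i + k) m with h | h
  · rw [Nat.mod_eq_of_lt h]; omega
  · rw [Nat.mod_eq_sub_mod h, Nat.mod_eq_of_lt (by omega)]; omega

lemma cycle_reachable {V : Type} {m : ℕ} (hm : 2 ≤ m) (c : Fin m → V)
    (hc : Function.Injective c) (S : Set (Sym2 V)) (i : Fin m)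
    (hS : ∀ b : Fin m, b ≠ i →
      s(c b, c ⟨(b.val + 1) % m, Nat.mod_lt _ (by omega)⟩) ∈ S) :
    (SimpleGraph.fromEdgeSet S).Reachable
      (c ⟨(i.val + 1) % m, Nat.mod_lt _ (by omega)⟩) (c i) := by
  have hm0 : 0 < m := by omega
  have key : ∀ j : ℕ, j + 1 ≤ m →
      (SimpleGraph.fromEdgeSet S).Reachable
        (c ⟨(i.val + (m - j)) % m, Nat.mod_lt _ hm0⟩) (c i) := by
    intro j
    induction j with
    | zero =>
      intro _
      have : (⟨(i.val + (m - 0)) % m, Nat.mod_lt _ hm0⟩ : Fin m) = i := by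
        ext
        simp only [Nat.sub_zero]
        rw [Nat.add_mod_right]
        exact Nat.mod_eq_of_lt i.isLt
      rw [this]
    | succ j ih =>
      intro hj
      have ih' := ih (by omega)
      set k := m - (j + 1) with hk
      have hk1 : 1 ≤ k := by omega
      have hkm : k < m := by omega
      set b : Fin m := ⟨(i.val + k) % m, Nat.mod_lt _ hm0⟩ with hb
      have hbne : b ≠ i := by
        intro hbi
        have := congrArg Fin.val hbi
        exact mod_ne_self i.isLt hk1 hkm this
      have hnext : (⟨(b.val + 1) % m, Nat.mod_lt _ hm0⟩ : Fin m) =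
          ⟨(i.val + (m - j)) % m, Nat.mod_lt _ hm0⟩ := by
        ext
        simp only [hb]
        rw [Nat.mod_add_mod]
        congr 1
        omega
      have hadj : (SimpleGraph.fromEdgeSet S).Adj (c b)
          (c ⟨(b.val + 1) % m, Nat.mod_lt _ hm0⟩) := by
        rw [SimpleGraph.fromEdgeSet_adj]
        refine ⟨hS b hbne, ?_⟩
        intro hcc
        apply mod_ne_self b.isLt (k := 1) one_pos (by omega)
        have := hc hcc
        exact (congrArg Fin.val this).symm
      refine Reachable.trans ?_ ih'
      rw [hnext] at hadj
      exact hadj.reachable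
  have h1 := key (m - 1) (by omega)
  have : m - (m - 1) = 1 := by omega
  rw [this] at h1
  exact h1

def uniClass {m r'' v' : ℕ} {t : Fin m → ℕ} {u : Fin r'' → ℕ} :
    UniE m r'' v' t u → (Fin m ⊕ Fin r'' ⊕ Fin v')
  | .inl e => .inl e.1
  | .inr (.inl e) => .inr (.inl e.1)
  | .inr (.inr a) => .inr (.inr a)

lemma uniEnds_eq {V : Type} {m r'' v' : ℕ} {t : Fin m → ℕ} {u : Fin r'' → ℕ}
    (c : Fin m → V) (bp : Fin r'' → Sym2 V) (sp : Fin v' → Sym2 V) (hm : 0 < m)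
    (e : UniE m r'' v' t u) :
    uniEnds m r'' v' t u c bp sp hm e = uniClassEnds m r'' v' c bp sp hm (uniClass e) := by
  rcases e with ⟨i, x⟩ | (⟨j, y⟩ | a) <;> rfl

def uniTree {m r'' v' : ℕ} (t : Fin m → ℕ) (u : Fin r'' → ℕ) (i : Fin m)
    (f : ∀ b : {b : Fin m // b ≠ i}, Fin (t b.1)) (g : ∀ j : Fin r'', Fin (u j)) :
    Finset (UniE m r'' v' t u) :=
  (Finset.univ.image fun b : {b : Fin m // b ≠ i} => Sum.inl ⟨b.1, f b⟩) ∪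
  (Finset.univ.image fun j : Fin r'' => Sum.inr (Sum.inl ⟨j, g j⟩)) ∪
  (Finset.univ.image fun a : Fin v' => Sum.inr (Sum.inr a))

lemma mem_uniTree_inl {m r'' v' : ℕ} {t : Fin m → ℕ} {u : Fin r'' → ℕ} {i : Fin m}
    {f : ∀ b : {b : Fin m // b ≠ i}, Fin (t b.1)} {g : ∀ j : Fin r'', Fin (u j)}
    {b : Fin m} {x : Fin (t b)} :
    (Sum.inl ⟨b, x⟩ : UniE m r'' v' t u) ∈ uniTree t u i f g ↔
      ∃ h : b ≠ i, x = f ⟨b, h⟩ := by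
  simp only [uniTree, Finset.mem_union, Finset.mem_image, Finset.mem_univ, true_and]
  constructor
  · rintro ((⟨⟨b', hb'⟩, hb⟩ | ⟨j, hj⟩) | ⟨a, ha⟩)
    · obtain ⟨h1, h2⟩ := Sigma.mk.inj_iff.mp (Sum.inl.inj hb)
      subst h1
      exact ⟨hb', (eq_of_heq h2).symm⟩
    · exact absurd hj (by simp)
    · exact absurd ha (by simp)
  · rintro ⟨h, rfl⟩
    exact Or.inl (Or.inl ⟨⟨b, h⟩, rfl⟩)

lemma mem_uniTree_inrl {m r'' v' : ℕ} {t : Fin m → ℕ} {u : Fin r'' → ℕ} {i : Fin m}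
    {f : ∀ b : {b : Fin m // b ≠ i}, Fin (t b.1)} {g : ∀ j : Fin r'', Fin (u j)}
    {j : Fin r''} {y : Fin (u j)} :
    (Sum.inr (Sum.inl ⟨j, y⟩) : UniE m r'' v' t u) ∈ uniTree t u i f g ↔ y = g j := by
  simp only [uniTree, Finset.mem_union, Finset.mem_image, Finset.mem_univ, true_and]
  constructor
  · rintro ((⟨b', hb⟩ | ⟨j', hj⟩) | ⟨a, ha⟩)
    · exact absurd hb (by simp)
    · obtain ⟨h1, h2⟩ := Sigma.mk.inj_iff.mp (Sum.inl.inj (Sum.inr.inj hj))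
      subst h1
      exact (eq_of_heq h2).symm
    · exact absurd ha (by simp)
  · rintro rfl
    exact Or.inl (Or.inr ⟨j, rfl⟩)

lemma mem_uniTree_inrr {m r'' v' : ℕ} {t : Fin m → ℕ} {u : Fin r'' → ℕ} {i : Fin m}
    {f : ∀ b : {b : Fin m // b ≠ i}, Fin (t b.1)} {g : ∀ j : Fin r'', Fin (u j)}
    {a : Fin v'} :
    (Sum.inr (Sum.inr a) : UniE m r'' v' t u) ∈ uniTree t u i f g := by
  simp only [uniTree, Finset.mem_union, Finset.mem_image, Finset.mem_univ, true_and]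
  exact Or.inr ⟨a, rfl⟩


lemma stmt3_aux {V : Type} [Fintype V] (m r' r'' v' : ℕ) (hm : 3 ≤ m) (hr' : r' ≤ m)
    (t : Fin m → ℕ) (ht2 : ∀ i : Fin m, i.val < r' → 2 ≤ t i)
    (ht1 : ∀ i : Fin m, r' ≤ i.val → t i = 1)
    (u : Fin r'' → ℕ) (hu : ∀ j, 2 ≤ u j)
    (c : Fin m → V) (hc : Function.Injective c)
    (bp : Fin r'' → Sym2 V) (sp : Fin v' → Sym2 V)
    (hbp : ∀ j, ¬ (bp j).IsDiag) (hsp : ∀ a, ¬ (sp a).IsDiag)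
    (hm0 : 0 < m)
    (hinj : Function.Injective (uniClassEnds m r'' v' c bp sp hm0))
    (hconn : (SimpleGraph.fromEdgeSet
      (Set.range (uniEnds m r'' v' t u c bp sp hm0))).Connected)
    (hV : Fintype.card V = m + r'' + v') :
    Nat.card {T : Finset (UniE m r'' v' t u) //
        IsSpanningTree (uniEnds m r'' v' t u c bp sp hm0) T} =
      (∏ j, u j) *
        ((∑ i ∈ Finset.univ.filter (fun i : Fin m => i.val < r'),
            ∏ b ∈ (Finset.univ.filter (fun b : Fin m => b.val < r')).erase i, t b) +
          (m - r') * ∏ i ∈ Finset.univ.filter (fun i : Fin m => i.val < r'), t i) := by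
  classical
  set ends := uniEnds m r'' v' t u c bp sp hm0 with hends
  set W := uniClassEnds m r'' v' c bp sp hm0 with hWdef
  set ε : Fin m → Sym2 V := fun i => W (Sum.inl i) with hε
  set E₀ : Set (Sym2 V) := Set.range W with hE₀
  have ht1' : ∀ b : Fin m, 1 ≤ t b := by
    intro b
    rcases Nat.lt_or_ge b.val r' with h | h
    · have := ht2 b h; omega
    · rw [ht1 b h]
  have hends_eq : ∀ e, ends e = W (uniClass e) := fun e => uniEnds_eq c bp sp hm0 e
  have hrange : Set.range ends = E₀ := by
    ext y
    constructor
    · rintro ⟨e, rfl⟩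
      exact ⟨uniClass e, (hends_eq e).symm⟩
    · rintro ⟨χ, rfl⟩
      rcases χ with b | (j | a)
      · exact ⟨Sum.inl ⟨b, ⟨0, ht1' b⟩⟩, rfl⟩
      · exact ⟨Sum.inr (Sum.inl ⟨j, ⟨0, by have := hu j; omega⟩⟩), rfl⟩
      · exact ⟨Sum.inr (Sum.inr a), rfl⟩
  have hnd : ∀ χ, ¬(W χ).IsDiag := by
    rintro (b | (j | a))
    · show ¬(s(c b, c ⟨(b.val + 1) % m, Nat.mod_lt _ hm0⟩)).IsDiag
      rw [Sym2.mk_isDiag_iff]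
      intro h
      have := congrArg Fin.val (hc h)
      exact mod_ne_self b.isLt one_pos (by omega) this.symm
    · exact hbp j
    · exact hsp a
  have hconn' : (fromEdgeSet E₀).Connected := by rwa [hrange] at hconn
  have hnV : Nonempty V := hconn.nonempty
  have hE₀card : E₀.ncard = m + r'' + v' := by
    rw [hE₀, ← Set.image_univ, Set.ncard_image_of_injective _ hinj, Set.ncard_univ]
    simp only [Nat.card_eq_fintype_card, Fintype.card_sum, Fintype.card_fin]
    omega
  have hεmem : ∀ i, ε i ∈ E₀ := fun i => ⟨Sum.inl i, rfl⟩
  -- deleting one cycle edge yields a tree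
  have htree_del : ∀ i : Fin m, (fromEdgeSet (E₀ \ {ε i})).IsTree := by
    intro i
    have hreach : (fromEdgeSet (E₀ \ {ε i})).Reachable
        (c ⟨(i.val + 1) % m, Nat.mod_lt _ hm0⟩) (c i) := by
      refine cycle_reachable (by omega) c hc _ i ?_
      intro b hb
      refine ⟨⟨Sum.inl b, rfl⟩, ?_⟩
      simp only [Set.mem_singleton_iff]
      intro h
      exact hb (Sum.inl.inj (hinj h))
    apply isTree_of_connected_of_card
    · refine Connected.mk fun a b => ?_
      refine transfer_reachable (v := c i)
        (w := c ⟨(i.val + 1) % m, Nat.mod_lt _ hm0⟩) hreach.symm ?_ (hconn' a b)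
      intro a b hab hne
      rw [fromEdgeSet_adj] at hab ⊢
      exact ⟨⟨hab.1, fun h => hne h⟩, hab.2⟩
    · have h1 : (fromEdgeSet (E₀ \ {ε i})).edgeSet = E₀ \ {ε i} := by
        rw [edgeSet_fromEdgeSet]
        ext y
        simp only [Set.mem_diff, Set.mem_setOf_eq, and_iff_left_iff_imp]
        rintro ⟨⟨χ, rfl⟩, -⟩
        exact hnd χ
      rw [h1, Set.ncard_diff_singleton_of_mem (hεmem i), hE₀card, hV]
      omega
  -- image of candidate trees
  have himage : ∀ (i : Fin m) (f : ∀ b : {b : Fin m // b ≠ i}, Fin (t b.1))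
      (g : ∀ j : Fin r'', Fin (u j)),
      ends '' ↑(uniTree (v' := v') t u i f g) = E₀ \ {ε i} := by
    intro i f g
    ext y
    constructor
    · rintro ⟨e, he, rfl⟩
      rw [Finset.mem_coe] at he
      rw [hends_eq]
      refine ⟨⟨uniClass e, rfl⟩, ?_⟩
      simp only [Set.mem_singleton_iff]
      intro hy
      have hcl := hinj hy
      rcases e with ⟨b, x⟩ | (⟨j, yy⟩ | a)
      · obtain ⟨hbne, -⟩ := mem_uniTree_inl.mp he
        exact hbne (Sum.inl.inj hcl)
      · simp [uniClass] at hcl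
      · simp [uniClass] at hcl
    · rintro ⟨⟨χ, rfl⟩, hy⟩
      simp only [Set.mem_singleton_iff] at hy
      rcases χ with b | (j | a)
      · have hbne : b ≠ i := fun h => hy (by rw [h])
        refine ⟨Sum.inl ⟨b, f ⟨b, hbne⟩⟩, ?_, rfl⟩
        rw [Finset.mem_coe]
        exact mem_uniTree_inl.mpr ⟨hbne, rfl⟩
      · refine ⟨Sum.inr (Sum.inl ⟨j, g j⟩), ?_, rfl⟩
        rw [Finset.mem_coe]
        exact mem_uniTree_inrl.mpr rfl
      · refine ⟨Sum.inr (Sum.inr a), ?_, rfl⟩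
        rw [Finset.mem_coe]
        exact mem_uniTree_inrr
  -- forward: every candidate is a spanning tree
  have hspan : ∀ (i : Fin m) (f : ∀ b : {b : Fin m // b ≠ i}, Fin (t b.1))
      (g : ∀ j : Fin r'', Fin (u j)),
      IsSpanningTree ends (uniTree (v' := v') t u i f g) := by
    intro i f g
    refine ⟨?_, fun e _ => by rw [hends_eq]; exact hnd _, ?_⟩
    · intro e he e' he' hee
      rw [Finset.mem_coe] at he he'
      rw [hends_eq, hends_eq] at hee
      have hcl := hinj hee
      rcases e with ⟨b, x⟩ | (⟨j, yy⟩ | a) <;> rcases e' with ⟨b', x'⟩ | (⟨j', yy'⟩ | a') <;>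
        simp only [uniClass, Sum.inl.injEq, Sum.inr.injEq, reduceCtorEq] at hcl
      · subst hcl
        obtain ⟨h1, h2⟩ := mem_uniTree_inl.mp he
        obtain ⟨h1', h2'⟩ := mem_uniTree_inl.mp he'
        rw [h2, h2']
      · subst hcl
        rw [mem_uniTree_inrl.mp he, mem_uniTree_inrl.mp he']
      · rw [hcl]
    · rw [himage i f g]
      exact htree_del i
  -- backward: every spanning tree is a candidate
  have hchar : ∀ T : Finset (UniE m r'' v' t u), IsSpanningTree ends T →
      ∃ (i : Fin m) (f : ∀ b : {b : Fin m // b ≠ i}, Fin (t b.1))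
        (g : ∀ j : Fin r'', Fin (u j)), T = uniTree (v' := v') t u i f g := by
    intro T hT
    obtain ⟨hInj, hndT, htree⟩ := hT
    set S : Set (Sym2 V) := ends '' ↑T with hSdef
    have hSsub : S ⊆ E₀ := by
      rintro y ⟨e, -, rfl⟩
      rw [hends_eq]
      exact ⟨_, rfl⟩
    have hSedge : (fromEdgeSet S).edgeSet = S := by
      rw [edgeSet_fromEdgeSet]
      ext y
      simp only [Set.mem_diff, Set.mem_setOf_eq, and_iff_left_iff_imp]
      rintro ⟨e, he, rfl⟩
      exact hndT e he
    have hTcard : S.ncard + 1 = Fintype.card V := by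
      have h1 := htree.card_edgeFinset
      have h2 : (fromEdgeSet S).edgeFinset = S.toFinset := by
        ext y
        rw [SimpleGraph.mem_edgeFinset, hSedge, Set.mem_toFinset]
      rw [h2] at h1
      rwa [Set.ncard_eq_toFinset_card']
    have hdiff : (E₀ \ S).ncard = 1 := by
      rw [Set.ncard_diff hSsub (Set.Finite.subset (Set.finite_range W) hSsub), hE₀card]
      omega
    obtain ⟨x, hx⟩ := Set.ncard_eq_one.mp hdiff
    have hSx : S = E₀ \ {x} := by
      rw [← Set.diff_diff_cancel_left hSsub, hx]
    have hxE : x ∈ E₀ ∧ x ∉ S := by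
      have : x ∈ E₀ \ S := by rw [hx]; exact Set.mem_singleton x
      exact ⟨this.1, this.2⟩
    obtain ⟨χ, hχ⟩ := hxE.1
    have hcyc_in : ∀ b : Fin m, ε b ≠ x → ε b ∈ S := by
      intro b hb
      rw [hSx]
      exact ⟨hεmem b, hb⟩
    have hχcyc : ∃ i : Fin m, χ = Sum.inl i := by
      rcases χ with b | ξ
      · exact ⟨b, rfl⟩
      · exfalso
        have hall : ∀ b : Fin m, ε b ∈ S := by
          intro b
          refine hcyc_in b ?_
          rw [← hχ]
          intro h
          exact (by simpa using hinj h)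
        set i0 : Fin m := ⟨0, hm0⟩ with hi0
        have hadj0 : (fromEdgeSet S).Adj (c i0) (c ⟨(i0.val + 1) % m, Nat.mod_lt _ hm0⟩) := by
          rw [fromEdgeSet_adj]
          refine ⟨hall i0, fun h => hnd (Sum.inl i0) (Sym2.mk_isDiag_iff.mpr h)⟩
        have hbridge := (isAcyclic_iff_forall_adj_isBridge.mp htree.IsAcyclic) hadj0
        rw [isBridge_iff] at hbridge
        refine hbridge ?_
        have hr := cycle_reachable (m := m) (by omega) c hc (S \ {ε i0}) i0 ?_
        · refine Reachable.mono ?_ hr.symm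
          intro a b hab
          rw [fromEdgeSet_adj] at hab
          change (fromEdgeSet S \ fromEdgeSet _).Adj a b
          rw [sdiff_adj, fromEdgeSet_adj, fromEdgeSet_adj]
          refine ⟨⟨hab.1.1, hab.2⟩, ?_⟩
          rintro ⟨h1, -⟩
          exact hab.1.2 h1
        · intro b hb
          refine ⟨hall b, ?_⟩
          simp only [Set.mem_singleton_iff]
          intro h
          exact hb (Sum.inl.inj (hinj h))
    obtain ⟨i, rfl⟩ := hχcyc
    have hxεi : x = ε i := hχ.symm
    have hclassmem : ∀ e ∈ T, uniClass e ≠ Sum.inl i := by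
      intro e he h
      have hmem : ends e ∈ S := ⟨e, he, rfl⟩
      rw [hSx] at hmem
      refine hmem.2 ?_
      rw [Set.mem_singleton_iff, hends_eq, h, hxεi]
    have hex_cyc : ∀ b : {b : Fin m // b ≠ i}, ∃ xx : Fin (t b.1),
        (Sum.inl ⟨b.1, xx⟩ : UniE m r'' v' t u) ∈ T := by
      intro b
      have hmem : ε b.1 ∈ S := by
        refine hcyc_in b.1 ?_
        rw [hxεi]
        intro h
        exact b.2 (Sum.inl.inj (hinj h))
      obtain ⟨e, he, hee⟩ := hmem
      have hcl : uniClass e = Sum.inl b.1 := hinj ((hends_eq e).symm.trans hee)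
      rcases e with ⟨b', xx⟩ | (⟨j, yy⟩ | a)
      · simp only [uniClass, Sum.inl.injEq] at hcl
        subst hcl
        exact ⟨xx, he⟩
      · simp [uniClass] at hcl
      · simp [uniClass] at hcl
    have hex_br : ∀ j : Fin r'', ∃ yy : Fin (u j),
        (Sum.inr (Sum.inl ⟨j, yy⟩) : UniE m r'' v' t u) ∈ T := by
      intro j
      have hmem : W (Sum.inr (Sum.inl j)) ∈ S := by
        rw [hSx]
        refine ⟨⟨_, rfl⟩, ?_⟩
        rw [Set.mem_singleton_iff, hxεi]
        intro h
        exact (by simpa using hinj h)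
      obtain ⟨e, he, hee⟩ := hmem
      have hcl : uniClass e = Sum.inr (Sum.inl j) := hinj ((hends_eq e).symm.trans hee)
      rcases e with ⟨b', xx⟩ | (⟨j', yy⟩ | a)
      · simp [uniClass] at hcl
      · simp only [uniClass, Sum.inr.injEq, Sum.inl.injEq] at hcl
        subst hcl
        exact ⟨yy, he⟩
      · simp [uniClass] at hcl
    have hsingle : ∀ a : Fin v', (Sum.inr (Sum.inr a) : UniE m r'' v' t u) ∈ T := by
      intro a
      have hmem : W (Sum.inr (Sum.inr a)) ∈ S := by
        rw [hSx]
        refine ⟨⟨_, rfl⟩, ?_⟩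
        rw [Set.mem_singleton_iff, hxεi]
        intro h
        exact (by simpa using hinj h)
      obtain ⟨e, he, hee⟩ := hmem
      have hcl : uniClass e = Sum.inr (Sum.inr a) := hinj ((hends_eq e).symm.trans hee)
      rcases e with ⟨b', xx⟩ | (⟨j', yy⟩ | a')
      · simp [uniClass] at hcl
      · simp [uniClass] at hcl
      · simp only [uniClass, Sum.inr.injEq] at hcl
        rw [← hcl]
        exact he
    choose f hf using hex_cyc
    choose g hg using hex_br
    refine ⟨i, f, g, ?_⟩
    apply Finset.Subset.antisymm
    · intro e he
      rcases e with ⟨b, xx⟩ | (⟨j, yy⟩ | a)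
      · have hbne : b ≠ i := by
          intro h
          exact hclassmem _ he (by simp [uniClass, h])
        have h2 := hf ⟨b, hbne⟩
        have heq : (Sum.inl ⟨b, xx⟩ : UniE m r'' v' t u) = Sum.inl ⟨b, f ⟨b, hbne⟩⟩ :=
          hInj (Finset.mem_coe.mpr he) (Finset.mem_coe.mpr h2) rfl
        rw [heq]
        exact mem_uniTree_inl.mpr ⟨hbne, rfl⟩
      · have h2 := hg j
        have heq : (Sum.inr (Sum.inl ⟨j, yy⟩) : UniE m r'' v' t u) = Sum.inr (Sum.inl ⟨j, g j⟩) :=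
          hInj (Finset.mem_coe.mpr he) (Finset.mem_coe.mpr h2) rfl
        rw [heq]
        exact mem_uniTree_inrl.mpr rfl
      · exact mem_uniTree_inrr
    · intro e he
      rcases e with ⟨b, xx⟩ | (⟨j, yy⟩ | a)
      · obtain ⟨hbne, h2⟩ := mem_uniTree_inl.mp he
        rw [h2]
        exact hf ⟨b, hbne⟩
      · rw [mem_uniTree_inrl.mp he]
        exact hg j
      · exact hsingle a
  -- count via bijection
  have hcount : Nat.card {T : Finset (UniE m r'' v' t u) // IsSpanningTree ends T} =
      ∑ i : Fin m, (∏ b ∈ Finset.univ.erase i, t b) * ∏ j, u j := by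
    have hbij : Function.Bijective
        (fun d : Σ i : Fin m, ((∀ b : {b : Fin m // b ≠ i}, Fin (t b.1)) ×
            (∀ j : Fin r'', Fin (u j))) =>
          (⟨uniTree (v' := v') t u d.1 d.2.1 d.2.2, hspan d.1 d.2.1 d.2.2⟩ :
            {T : Finset (UniE m r'' v' t u) // IsSpanningTree ends T})) := by
      constructor
      · rintro ⟨i, f, g⟩ ⟨i', f', g'⟩ h
        simp only [Subtype.mk.injEq] at h
        have hii : i = i' := by
          by_contra hne
          have h1 : (Sum.inl ⟨i, f' ⟨i, hne⟩⟩ : UniE m r'' v' t u) ∈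
              uniTree (v' := v') t u i' f' g' := mem_uniTree_inl.mpr ⟨hne, rfl⟩
          rw [← h] at h1
          obtain ⟨hh, -⟩ := mem_uniTree_inl.mp h1
          exact hh rfl
        subst hii
        have hf : f = f' := by
          funext b
          obtain ⟨b, hb⟩ := b
          have h1 : (Sum.inl ⟨b, f ⟨b, hb⟩⟩ : UniE m r'' v' t u) ∈
              uniTree (v' := v') t u i f g := mem_uniTree_inl.mpr ⟨hb, rfl⟩
          rw [h] at h1
          obtain ⟨hh, h2⟩ := mem_uniTree_inl.mp h1
          exact h2
        have hg : g = g' := by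
          funext j
          have h1 : (Sum.inr (Sum.inl ⟨j, g j⟩) : UniE m r'' v' t u) ∈
              uniTree (v' := v') t u i f g := mem_uniTree_inrl.mpr rfl
          rw [h] at h1
          exact mem_uniTree_inrl.mp h1
        rw [hf, hg]
      · rintro ⟨T, hT⟩
        obtain ⟨i, f, g, rfl⟩ := hchar T hT
        exact ⟨⟨i, f, g⟩, rfl⟩
    rw [← Nat.card_eq_of_bijective _ hbij, Nat.card_eq_fintype_card, Fintype.card_sigma]
    refine Finset.sum_congr rfl fun i _ => ?_
    rw [Fintype.card_prod, Fintype.card_pi, Fintype.card_pi]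
    simp only [Fintype.card_fin]
    congr 1
    exact (Finset.prod_subtype (Finset.univ.erase i)
      (fun x => by simp [Finset.mem_erase]) t).symm
  rw [hcount]
  -- arithmetic
  set U := ∏ j, u j with hU
  set R := Finset.univ.filter (fun b : Fin m => b.val < r') with hR
  have hstep1 : ∀ i ∈ R, ∏ b ∈ Finset.univ.erase i, t b = ∏ b ∈ R.erase i, t b := by
    intro i _
    refine (Finset.prod_subset ?_ ?_).symm
    · intro x hx
      rw [Finset.mem_erase] at hx ⊢
      exact ⟨hx.1, Finset.mem_univ x⟩
    · intro x hx hnx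
      rw [Finset.mem_erase] at hx
      rw [Finset.mem_erase, hR, Finset.mem_filter] at hnx
      refine ht1 x ?_
      by_contra hlt
      exact hnx ⟨hx.1, Finset.mem_univ x, by omega⟩
  have hstep2 : ∀ i ∈ Finset.univ.filter (fun b : Fin m => ¬ b.val < r'),
      ∏ b ∈ Finset.univ.erase i, t b = ∏ b ∈ R, t b := by
    intro i hi
    rw [Finset.mem_filter] at hi
    refine (Finset.prod_subset ?_ ?_).symm
    · intro x hx
      rw [hR, Finset.mem_filter] at hx
      rw [Finset.mem_erase]
      refine ⟨?_, Finset.mem_univ x⟩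
      intro hxi
      rw [hxi] at hx
      exact hi.2 hx.2
    · intro x hx hnx
      rw [hR, Finset.mem_filter] at hnx
      refine ht1 x ?_
      by_contra hlt
      exact hnx ⟨Finset.mem_univ x, by omega⟩
  have hRcard : R.card = r' := by
    have himg : R.image Fin.val = Finset.range r' := by
      ext a
      simp only [Finset.mem_image, Finset.mem_range, hR, Finset.mem_filter, Finset.mem_univ,
        true_and]
      constructor
      · rintro ⟨b, hb, rfl⟩
        exact hb
      · intro ha
        exact ⟨⟨a, by omega⟩, ha, rfl⟩
    rw [← Finset.card_range r', ← himg, Finset.card_image_of_injective R Fin.val_injective]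
  have hRcard' : (Finset.univ.filter (fun b : Fin m => ¬ b.val < r')).card = m - r' := by
    have h1 := Finset.card_filter_add_card_filter_not
      (s := (Finset.univ : Finset (Fin m))) (p := fun b : Fin m => b.val < r')
    rw [Finset.card_univ, Fintype.card_fin] at h1
    rw [← hR] at h1  -- maybe unnecessary
    omega
  have hsplit := Finset.sum_filter_add_sum_filter_not Finset.univ
      (fun b : Fin m => b.val < r') (fun i => (∏ b ∈ Finset.univ.erase i, t b) * U)
  have hA : ∑ i ∈ R, (∏ b ∈ Finset.univ.erase i, t b) * U
      = (∑ i ∈ R, ∏ b ∈ R.erase i, t b) * U := by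
    rw [Finset.sum_mul]
    exact Finset.sum_congr rfl fun i hi => by rw [hstep1 i hi]
  have hB : ∑ i ∈ Finset.univ.filter (fun b : Fin m => ¬ b.val < r'),
      (∏ b ∈ Finset.univ.erase i, t b) * U = (m - r') * ((∏ b ∈ R, t b) * U) := by
    have hcg : ∀ i ∈ Finset.univ.filter (fun b : Fin m => ¬ b.val < r'),
        (∏ b ∈ Finset.univ.erase i, t b) * U = (∏ b ∈ R, t b) * U :=
      fun i hi => by rw [hstep2 i hi]
    rw [Finset.sum_congr rfl hcg, Finset.sum_const, smul_eq_mul, hRcard']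
  rw [← hsplit, hA, hB]
  ring

end Helpers

theorem stmt3 {V : Type} [Fintype V] (m r' r'' v' n : ℕ) (hm : 3 ≤ m) (hr' : r' ≤ m)
    (t : Fin m → ℕ) (ht2 : ∀ i : Fin m, i.val < r' → 2 ≤ t i)
    (ht1 : ∀ i : Fin m, r' ≤ i.val → t i = 1)
    (u : Fin r'' → ℕ) (hu : ∀ j, 2 ≤ u j)
    (c : Fin m → V) (hc : Function.Injective c)
    (bp : Fin r'' → Sym2 V) (sp : Fin v' → Sym2 V)
    (hbp : ∀ j, ¬ (bp j).IsDiag) (hsp : ∀ a, ¬ (sp a).IsDiag)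
    (hinj : Function.Injective (uniClassEnds m r'' v' c bp sp (by omega)))
    (hconn : (SimpleGraph.fromEdgeSet
      (Set.range (uniEnds m r'' v' t u c bp sp (by omega)))).Connected)
    (hV : Fintype.card V = m + r'' + v')
    (hn : n = (∑ i, t i) + (∑ j, u j) + v') :
    Nat.card {T : Finset (UniE m r'' v' t u) //
        IsSpanningTree (uniEnds m r'' v' t u c bp sp (by omega)) T} =
      (∏ j, u j) *
        ((∑ i ∈ Finset.univ.filter (fun i : Fin m => i.val < r'),
            ∏ b ∈ (Finset.univ.filter (fun b : Fin m => b.val < r')).erase i, t b) +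
          (m - r') * ∏ i ∈ Finset.univ.filter (fun i : Fin m => i.val < r'), t i) := by
  exact stmt3_aux m r' r'' v' hm hr' t ht2 ht1 u hu c hc bp sp hbp hsp (by omega) hinj hconn hV
end

section
/- Let Δ be the spanning simplicial complex of a connected multigraph G. A set M of edges is a minimal vertex cover of Δ (a minimal set meeting every facet) if and only if M is a minimal edge cut of G, i.e. a minimal set of edges whose removal disconnects G. -/
open SimpleGraph

lemma reach_del {V : Type} {G : SimpleGraph V} {u v : V}
    (h : (G \ fromEdgeSet {s(u,v)}).Reachable u v) {x y : V} (p : G.Walk x y) :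
    (G \ fromEdgeSet {s(u,v)}).Reachable x y := by
  induction p with
  | nil => exact Reachable.refl _
  | @cons a b c hadj p ih =>
    refine Reachable.trans ?_ ih
    by_cases he : s(a, b) = s(u, v)
    · rw [Sym2.eq_iff] at he
      rcases he with ⟨rfl, rfl⟩ | ⟨rfl, rfl⟩
      · exact h
      · exact h.symm
    · exact Adj.reachable (by simp [hadj, he, hadj.ne])

lemma exists_spanning_tree {V : Type} [Fintype V] (G : SimpleGraph V) (hG : G.Connected) :
    ∃ s : Set (Sym2 V), s ⊆ G.edgeSet ∧ (fromEdgeSet s).IsTree := by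
  classical
  obtain ⟨n, hn⟩ : ∃ n, G.edgeSet.toFinite.toFinset.card ≤ n := ⟨_, le_rfl⟩
  induction n using Nat.strong_induction_on generalizing G with
  | _ n ih =>
  by_cases ha : G.IsAcyclic
  · exact ⟨G.edgeSet, le_rfl, by rw [fromEdgeSet_edgeSet]; exact ⟨hG, ha⟩⟩
  · simp only [IsAcyclic, not_forall, not_not] at ha
    obtain ⟨v, c, hc⟩ := ha
    cases c with
    | nil => exact absurd rfl hc.ne_nil
    | @cons _ b _ hadj p =>
      have he : s(v, b) ∈ (SimpleGraph.Walk.cons hadj p).edges := by simp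
      have hreach := (adj_and_reachable_delete_edges_iff_exists_cycle.mpr
        ⟨v, _, hc, he⟩).2
      set G' := G \ fromEdgeSet {s(v, b)} with hG'
      have hle : G' ≤ G := sdiff_le
      have : Nonempty V := hG.nonempty
      have hG'conn : G'.Connected :=
        Connected.mk fun x y => (hG x y).elim fun q => reach_del hreach q
      have hnot : s(v, b) ∉ G'.edgeSet := by
        simp [hG', edgeSet_sdiff]
      have hss : G'.edgeSet ⊂ G.edgeSet :=
        ⟨edgeSet_mono hle, fun hsub => hnot (hsub hadj)⟩
      have hcard : G'.edgeSet.toFinite.toFinset.card < n := by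
        calc G'.edgeSet.toFinite.toFinset.card
            < G.edgeSet.toFinite.toFinset.card :=
              Finset.card_lt_card (Set.Finite.toFinset_ssubset_toFinset.mpr hss)
          _ ≤ n := hn
      obtain ⟨s, hs1, hs2⟩ := ih _ hcard G' hG'conn le_rfl
      exact ⟨s, hs1.trans (edgeSet_mono hle), hs2⟩

lemma key_equiv {V E : Type} [Fintype V] [Fintype E] [DecidableEq E] (ends : E → Sym2 V)
    (N : Finset E) :
    (∀ T, IsSpanningTree ends T → (N ∩ T).Nonempty) ↔
      ¬ (SimpleGraph.fromEdgeSet (ends '' ((↑N : Set E)ᶜ))).Connected := by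
  classical
  constructor
  · intro hcov hcon
    obtain ⟨s, hs1, hs2⟩ := exists_spanning_tree _ hcon
    have hchoice : ∀ a ∈ s, ∃ e, e ∉ N ∧ ends e = a := by
      intro a ha
      have h2 := hs1 ha
      rw [edgeSet_fromEdgeSet] at h2
      obtain ⟨⟨e, he, rfl⟩, -⟩ := h2
      exact ⟨e, he, rfl⟩
    choose f hf1 hf2 using hchoice
    have hsfin : s.Finite := Set.toFinite s
    set T : Finset E :=
      hsfin.toFinset.attach.image (fun a => f a.1 (hsfin.mem_toFinset.mp a.2)) with hT
    have hmem : ∀ e ∈ T, ∃ a, ∃ (ha : a ∈ s), e = f a ha := by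
      intro e he
      rw [hT, Finset.mem_image] at he
      obtain ⟨a, -, rfl⟩ := he
      exact ⟨a.1, _, rfl⟩
    have himg : ends '' (↑T : Set E) = s := by
      ext b
      constructor
      · rintro ⟨e, he, rfl⟩
        obtain ⟨a, ha, rfl⟩ := hmem e he
        rw [hf2 a ha]; exact ha
      · intro hb
        refine ⟨f b hb, ?_, hf2 b hb⟩
        rw [hT]
        simp only [Finset.coe_image, Set.mem_image, Finset.mem_coe, Finset.mem_attach]
        exact ⟨⟨b, hsfin.mem_toFinset.mpr hb⟩, trivial, rfl⟩
    have htree : IsSpanningTree ends T := by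
      refine ⟨?_, ?_, ?_⟩
      · intro e1 h1 e2 h2 heq
        obtain ⟨a1, ha1, rfl⟩ := hmem e1 h1
        obtain ⟨a2, ha2, rfl⟩ := hmem e2 h2
        rw [hf2 a1 ha1, hf2 a2 ha2] at heq
        subst heq; rfl
      · intro e he
        obtain ⟨a, ha, rfl⟩ := hmem e he
        rw [hf2 a ha]
        exact SimpleGraph.not_isDiag_of_mem_edgeSet _ (hs1 ha)
      · rw [himg]; exact hs2
    obtain ⟨x, hx⟩ := hcov T htree
    rw [Finset.mem_inter] at hx
    obtain ⟨a, ha, rfl⟩ := hmem x hx.2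
    exact hf1 a ha hx.1
  · intro hncon T hT
    by_contra hempty
    apply hncon
    rw [Finset.not_nonempty_iff_eq_empty] at hempty
    have hsub : (↑T : Set E) ⊆ (↑N : Set E)ᶜ := by
      intro e he hn
      have : e ∈ N ∩ T := Finset.mem_inter.mpr ⟨hn, he⟩
      simp [hempty] at this
    exact (hT.2.2.isConnected).mono
      (SimpleGraph.fromEdgeSet_mono (Set.image_mono (f := ends) hsub))

/-- Minimal vertex covers of the spanning simplicial complex of a connected
multigraph (minimal edge sets meeting every spanning tree) are exactly the
minimal edge cuts (minimal edge sets whose removal disconnects the graph). -/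
theorem stmt6 {V E : Type} [Fintype V] [Fintype E] [DecidableEq E] (ends : E → Sym2 V)
    (hconn : (SimpleGraph.fromEdgeSet (Set.range ends)).Connected) :
    ∀ M : Finset E,
      Minimal (fun M : Finset E =>
        ∀ T, IsSpanningTree ends T → (M ∩ T).Nonempty) M ↔
      Minimal (fun M : Finset E =>
        ¬ (SimpleGraph.fromEdgeSet (ends '' ((↑M : Set E)ᶜ))).Connected) M := by
  intro M
  constructor
  · rintro ⟨h1, h2⟩
    exact ⟨(key_equiv ends M).mp h1, fun y hy hle => h2 ((key_equiv ends y).mpr hy) hle⟩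
  · rintro ⟨h1, h2⟩
    exact ⟨(key_equiv ends M).mpr h1, fun y hy hle => h2 ((key_equiv ends y).mp hy) hle⟩
end

section
/- Let G be a connected multigraph whose edges partition into parallel classes of sizes t_1,…,t_k (singletons allowed) such that the underlying simple graph is a tree. Then the number of spanning trees of G equals ∏_{h=1}^{k} t_h, and the spanning simplicial complex of G is the join of k discrete sets of sizes t_1,…,t_k; in particular its Euler characteristic equals ∑_{i=0}^{k−1} (−1)^i e_{i+1}(t_1,…,t_k), where e_j denotes the j-th elementary symmetric polynomial. -/
namespace Stmt10Aux

variable {V : Type} [Fintype V] {k : ℕ} {t : Fin k → ℕ}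

lemma mk_snd_eq {e : Σ h : Fin k, Fin (t h)} {h : Fin k} (he : e.1 = h) :
    (⟨h, he ▸ e.2⟩ : Σ h : Fin k, Fin (t h)) = e := by
  cases e; subst he; rfl

lemma card_eq_sum_filter (T : Finset (Σ h : Fin k, Fin (t h))) :
    ∑ h : Fin k, (T.filter (fun e => e.1 = h)).card = T.card :=
  (Finset.card_eq_sum_card_fiberwise (fun e _ => Finset.mem_univ e.1)).symm

lemma tree_iff (p : Fin k → Sym2 V) (hp : Function.Injective p)
    (hpd : ∀ h, ¬ (p h).IsDiag)
    (htree : (SimpleGraph.fromEdgeSet (Set.range p)).IsTree)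
    (T : Finset (Σ h : Fin k, Fin (t h))) :
    IsSpanningTree (fun e => p e.1) T ↔
      ∀ h, (T.filter (fun e => e.1 = h)).card = 1 := by
  classical
  have hsub : ∀ (S : Finset (Σ h : Fin k, Fin (t h))),
      (fun e : Σ h : Fin k, Fin (t h) => p e.1) '' ↑S ⊆ Set.range p := by
    rintro S x ⟨e, _, rfl⟩; exact ⟨e.1, rfl⟩
  constructor
  · rintro ⟨hinj, hd, htr⟩
    have hatmost : ∀ h, (T.filter (fun e => e.1 = h)).card ≤ 1 := by
      intro h
      refine Finset.card_le_one.mpr ?_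
      intro a ha b hb
      simp only [Finset.mem_filter] at ha hb
      exact hinj ha.1 hb.1 (by show p a.1 = p b.1; rw [ha.2, hb.2])
    have hle : SimpleGraph.fromEdgeSet ((fun e : Σ h : Fin k, Fin (t h) => p e.1) '' ↑T)
        ≤ SimpleGraph.fromEdgeSet (Set.range p) := SimpleGraph.fromEdgeSet_mono (hsub T)
    have i1 : Fintype ((SimpleGraph.fromEdgeSet
        ((fun e : Σ h : Fin k, Fin (t h) => p e.1) '' ↑T)).edgeSet) := (Set.toFinite _).fintype
    have i2 : Fintype ((SimpleGraph.fromEdgeSet (Set.range p)).edgeSet) := (Set.toFinite _).fintype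
    have c1 := htr.card_edgeFinset
    have c2 := htree.card_edgeFinset
    have hsubF := SimpleGraph.edgeFinset_subset_edgeFinset.mpr hle
    have heqF := Finset.eq_of_subset_of_card_le hsubF (by omega)
    have heset : (SimpleGraph.fromEdgeSet
        ((fun e : Σ h : Fin k, Fin (t h) => p e.1) '' ↑T)).edgeSet
        = (SimpleGraph.fromEdgeSet (Set.range p)).edgeSet := by
      rw [← SimpleGraph.coe_edgeFinset, ← SimpleGraph.coe_edgeFinset, heqF]
    rw [SimpleGraph.edgeSet_fromEdgeSet, SimpleGraph.edgeSet_fromEdgeSet] at heset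
    intro h
    have hmem : p h ∈ ((fun e : Σ h : Fin k, Fin (t h) => p e.1) '' ↑T) \ {e | e.IsDiag} := by
      change p h ∈ _ \ Sym2.diagSet; rw [heset]; exact ⟨⟨h, rfl⟩, hpd h⟩
    obtain ⟨⟨e, heT, hpe⟩, -⟩ := hmem
    have he1 : e.1 = h := hp hpe
    have : 0 < (T.filter (fun e => e.1 = h)).card :=
      Finset.card_pos.mpr ⟨e, Finset.mem_filter.mpr ⟨heT, he1⟩⟩
    have := hatmost h
    omega
  · intro hone
    have huniq : ∀ e ∈ T, ∀ e' ∈ T, (e : Σ h : Fin k, Fin (t h)).1 = e'.1 → e = e' := by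
      intro e he e' he' h12
      refine Finset.card_le_one.mp (le_of_eq (hone e.1)) _ ?_ _ ?_
      · exact Finset.mem_filter.mpr ⟨he, rfl⟩
      · exact Finset.mem_filter.mpr ⟨he', h12.symm⟩
    have himg : (fun e : Σ h : Fin k, Fin (t h) => p e.1) '' ↑T = Set.range p := by
      refine Set.Subset.antisymm (hsub T) ?_
      rintro x ⟨h, rfl⟩
      have : 0 < (T.filter (fun e => e.1 = h)).card := by rw [hone h]; norm_num
      obtain ⟨e, heT⟩ := Finset.card_pos.mp this
      obtain ⟨heT, he1⟩ := Finset.mem_filter.mp heT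
      exact ⟨e, heT, by simp only []; rw [he1]⟩
    refine ⟨?_, fun e _ => hpd e.1, by rw [himg]; exact htree⟩
    intro e he e' he' hpe
    exact huniq e he e' he' (hp hpe)

lemma all_one_iff (T : Finset (Σ h : Fin k, Fin (t h))) :
    (∀ h, (T.filter (fun e => e.1 = h)).card = 1) ↔
      (∀ h, (T.filter (fun e => e.1 = h)).card ≤ 1) ∧ T.card = k := by
  constructor
  · intro h1
    refine ⟨fun h => le_of_eq (h1 h), ?_⟩
    rw [← card_eq_sum_filter]
    simp [h1]
  · rintro ⟨hle, hcard⟩ h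
    by_contra hne
    have h0 : (T.filter (fun e => e.1 = h)).card < 1 := lt_of_le_of_ne (hle h) hne
    have hlt : ∑ h' : Fin k, (T.filter (fun e => e.1 = h')).card < ∑ _h' : Fin k, 1 :=
      Finset.sum_lt_sum (fun h' _ => hle h') ⟨h, Finset.mem_univ h, h0⟩
    rw [card_eq_sum_filter, hcard] at hlt
    simp at hlt

lemma face_iff (ht : ∀ h, 1 ≤ t h) (p : Fin k → Sym2 V) (hp : Function.Injective p)
    (hpd : ∀ h, ¬ (p h).IsDiag)
    (htree : (SimpleGraph.fromEdgeSet (Set.range p)).IsTree)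
    (F : Finset (Σ h : Fin k, Fin (t h))) :
    (∃ T, IsSpanningTree (fun e => p e.1) T ∧ F ⊆ T) ↔
      ∀ h, (F.filter (fun e => e.1 = h)).card ≤ 1 := by
  classical
  constructor
  · rintro ⟨T, hT, hFT⟩ h
    have h1 := ((tree_iff p hp hpd htree T).mp hT) h
    calc (F.filter (fun e => e.1 = h)).card
        ≤ (T.filter (fun e => e.1 = h)).card :=
          Finset.card_le_card (Finset.filter_subset_filter _ hFT)
      _ = 1 := h1
  · intro hF
    set c : Fin k → (Σ h : Fin k, Fin (t h)) := fun h =>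
      if hne : (F.filter (fun e => e.1 = h)).Nonempty then hne.choose
      else ⟨h, ⟨0, ht h⟩⟩ with hc
    have hc1 : ∀ h, (c h).1 = h := by
      intro h
      rw [hc]
      dsimp only
      split
      · next hne => exact (Finset.mem_filter.mp hne.choose_spec).2
      · rfl
    have hsingle : ∀ e ∈ F, c e.1 = e := by
      intro e he
      have hne : (F.filter (fun e' => e'.1 = e.1)).Nonempty :=
        ⟨e, Finset.mem_filter.mpr ⟨he, rfl⟩⟩
      have h1 : c e.1 ∈ F.filter (fun e' => e'.1 = e.1) := by
        rw [hc]; dsimp only; rw [dif_pos hne]; exact hne.choose_spec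
      exact Finset.card_le_one.mp (hF e.1) _ h1 _ (Finset.mem_filter.mpr ⟨he, rfl⟩)
    refine ⟨Finset.univ.image c, ?_, ?_⟩
    · rw [tree_iff p hp hpd htree]
      intro h
      have hfil : (Finset.univ.image c).filter (fun e => e.1 = h) = {c h} := by
        ext x
        simp only [Finset.mem_filter, Finset.mem_image, Finset.mem_univ, true_and,
          Finset.mem_singleton]
        constructor
        · rintro ⟨⟨h', rfl⟩, hx⟩
          rw [hc1 h'] at hx
          rw [hx]
        · rintro rfl
          exact ⟨⟨h, rfl⟩, hc1 h⟩
      rw [hfil, Finset.card_singleton]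
    · intro e he
      exact Finset.mem_image.mpr ⟨e.1, Finset.mem_univ _, hsingle e he⟩

lemma count (t : Fin k → ℕ) (m : ℕ) :
    ((Finset.univ : Finset (Finset (Σ h : Fin k, Fin (t h)))).filter
      (fun F => (∀ h, (F.filter (fun e => e.1 = h)).card ≤ 1) ∧ F.card = m)).card =
    ∑ A ∈ Finset.univ.powersetCard m, ∏ h ∈ A, t h := by
  classical
  have hpi : ∀ A : Finset (Fin k),
      ((A.pi (fun h => (Finset.univ : Finset (Fin (t h))))).card) = ∏ h ∈ A, t h := by
    intro A; rw [Finset.card_pi]; simp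
  rw [← Finset.sum_congr rfl (fun A _ => (hpi A)), ← Finset.card_sigma]
  refine (Finset.card_bij
    (fun x _ => x.1.attach.image (fun h => (⟨h.1, x.2 h.1 h.2⟩ : Σ h : Fin k, Fin (t h))))
    ?_ ?_ ?_).symm
  · rintro ⟨A, g⟩ hx
    rw [Finset.mem_sigma, Finset.mem_powersetCard] at hx
    simp only [Finset.mem_filter, Finset.mem_univ, true_and]
    constructor
    · intro h
      refine Finset.card_le_one.mpr ?_
      intro a ha b hb
      simp only [Finset.mem_filter, Finset.mem_image, Finset.mem_attach, true_and] at ha hb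
      obtain ⟨⟨h₁, rfl⟩, ha2⟩ := ha
      obtain ⟨⟨h₂, rfl⟩, hb2⟩ := hb
      have : h₁ = h₂ := Subtype.ext (ha2.trans hb2.symm)
      rw [this]
    · rw [Finset.card_image_of_injOn, Finset.card_attach]
      · exact hx.1.2
      · intro a _ b _ hab
        exact Subtype.ext (congrArg Sigma.fst hab)
  · rintro ⟨A, g⟩ hx ⟨A', g'⟩ hx' heq
    dsimp only at heq
    have himgfst : ∀ (B : Finset (Fin k)) (g : ∀ a ∈ B, Fin (t a)),
        (B.attach.image (fun h => (⟨h.1, g h.1 h.2⟩ : Σ h : Fin k, Fin (t h)))).image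
          Sigma.fst = B := by
      intro B g
      rw [Finset.image_image]
      have : (Sigma.fst ∘ fun h : {x // x ∈ B} =>
          (⟨h.1, g h.1 h.2⟩ : Σ h : Fin k, Fin (t h))) = fun h => h.1 := rfl
      rw [this, Finset.attach_image_val]
    have hA : A = A' := by rw [← himgfst A g, ← himgfst A' g', heq]
    subst hA
    refine Sigma.ext rfl (heq_of_eq ?_)
    funext h hA
    have hmem : (⟨h, g h hA⟩ : Σ h : Fin k, Fin (t h)) ∈
        A.attach.image (fun h' => (⟨h'.1, g' h'.1 h'.2⟩ : Σ h : Fin k, Fin (t h))) := by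
      rw [← heq]
      exact Finset.mem_image.mpr ⟨⟨h, hA⟩, Finset.mem_attach _ _, rfl⟩
    obtain ⟨h', -, hh'⟩ := Finset.mem_image.mp hmem
    have h1 : h'.1 = h := congrArg Sigma.fst hh'
    have : h' = ⟨h, hA⟩ := Subtype.ext h1
    subst this
    exact (eq_of_heq (Sigma.mk.inj_iff.mp hh').2).symm
  · intro F hF
    rw [Finset.mem_filter] at hF
    obtain ⟨-, hface, hcard⟩ := hF
    have hinjF : Set.InjOn Sigma.fst (F : Set ((h : Fin k) × Fin (t h))) := by
      intro e he e' he' h12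
      refine Finset.card_le_one.mp (hface e.1) _ ?_ _ ?_
      · exact Finset.mem_filter.mpr ⟨he, rfl⟩
      · exact Finset.mem_filter.mpr ⟨he', h12.symm⟩
    set A : Finset (Fin k) := F.image Sigma.fst with hA
    have hAcard : A.card = m := by rw [hA, Finset.card_image_of_injOn hinjF, hcard]
    have hgex : ∀ h ∈ A, ∃ e, e ∈ F ∧ Sigma.fst e = h := by
      intro h hh; simpa using Finset.mem_image.mp hh
    refine ⟨⟨A, fun h hh => (hgex h hh).choose_spec.2 ▸ (hgex h hh).choose.2⟩, ?_, ?_⟩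
    · rw [Finset.mem_sigma, Finset.mem_powersetCard]
      exact ⟨⟨Finset.subset_univ A, hAcard⟩, by simp [Finset.mem_pi]⟩
    · have hsub2 : A.attach.image
          (fun h => (⟨h.1, (hgex h.1 h.2).choose_spec.2 ▸ (hgex h.1 h.2).choose.2⟩ :
            Σ h : Fin k, Fin (t h))) ⊆ F := by
        intro x hx
        obtain ⟨h', -, rfl⟩ := Finset.mem_image.mp hx
        rw [mk_snd_eq (hgex h'.1 h'.2).choose_spec.2]
        exact (hgex h'.1 h'.2).choose_spec.1
      refine (Finset.eq_of_subset_of_card_le hsub2 ?_)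
      rw [Finset.card_image_of_injOn, Finset.card_attach, hAcard, hcard]
      intro a _ b _ hab
      exact Subtype.ext (congrArg Sigma.fst hab)

lemma natCard_subtype {α : Type} [Fintype α] (P : α → Prop) [DecidablePred P] :
    Nat.card {x // P x} = (Finset.univ.filter P).card := by
  rw [Nat.card_eq_fintype_card, Fintype.card_subtype]

end Stmt10Aux

/-- A multigraph whose underlying simple graph is a tree with `k` edges of
endpoints `p h`, the `h`-th tree edge being a parallel class of size `t h ≥ 1`.
Then: the number of spanning trees is `∏ t h`; the faces of the spanning
simplicial complex are exactly the subsets with at most one edge from each class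
(the join of `k` discrete sets of sizes `t h`); and the Euler characteristic is
`∑_{i=0}^{k-1} (-1)^i e_{i+1}(t₁,…,t_k)` with `e_j` the elementary symmetric
polynomials. -/
theorem stmt10 {V : Type} [Fintype V] (k : ℕ) (t : Fin k → ℕ) (ht : ∀ h, 1 ≤ t h)
    (p : Fin k → Sym2 V) (hp : Function.Injective p) (hpd : ∀ h, ¬ (p h).IsDiag)
    (htree : (SimpleGraph.fromEdgeSet (Set.range p)).IsTree) :
    Nat.card {T : Finset (Σ h : Fin k, Fin (t h)) //
        IsSpanningTree (fun e => p e.1) T} = ∏ h, t h ∧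
    (∀ F : Finset (Σ h : Fin k, Fin (t h)),
      (∃ T, IsSpanningTree (fun e => p e.1) T ∧ F ⊆ T) ↔
      ∀ h : Fin k, (F.filter (fun e => e.1 = h)).card ≤ 1) ∧
    (∑ i ∈ Finset.range k, (-1 : ℤ) ^ i *
        Nat.card {F : Finset (Σ h : Fin k, Fin (t h)) //
          (∃ T, IsSpanningTree (fun e => p e.1) T ∧ F ⊆ T) ∧ F.card = i + 1}) =
      ∑ i ∈ Finset.range k, (-1 : ℤ) ^ i *
        ∑ A ∈ Finset.univ.powersetCard (i + 1), ∏ h ∈ A, (t h : ℤ) := by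
  classical
  have hti := Stmt10Aux.tree_iff (t := t) p hp hpd htree
  have hfi := Stmt10Aux.face_iff ht p hp hpd htree
  refine ⟨?_, hfi, ?_⟩
  · rw [Stmt10Aux.natCard_subtype]
    have hfe : (Finset.univ.filter (fun T : Finset (Σ h : Fin k, Fin (t h)) =>
        IsSpanningTree (fun e => p e.1) T))
        = Finset.univ.filter (fun F : Finset (Σ h : Fin k, Fin (t h)) =>
          (∀ h, (F.filter (fun e => e.1 = h)).card ≤ 1) ∧ F.card = k) := by
      ext T
      simp only [Finset.mem_filter, Finset.mem_univ, true_and]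
      rw [hti T, Stmt10Aux.all_one_iff]
    rw [hfe, Stmt10Aux.count]
    have hps : Finset.univ.powersetCard k = {(Finset.univ : Finset (Fin k))} := by
      ext A
      simp only [Finset.mem_powersetCard, Finset.subset_univ, true_and, Finset.mem_singleton]
      constructor
      · intro hAc
        exact Finset.eq_univ_of_card A (by rw [hAc, Fintype.card_fin])
      · rintro rfl
        simp
    rw [hps, Finset.sum_singleton]
  · refine Finset.sum_congr rfl (fun i _ => ?_)
    congr 1
    rw [Stmt10Aux.natCard_subtype]
    have hfe : (Finset.univ.filter (fun F : Finset (Σ h : Fin k, Fin (t h)) =>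
        (∃ T, IsSpanningTree (fun e => p e.1) T ∧ F ⊆ T) ∧ F.card = i + 1))
        = Finset.univ.filter (fun F : Finset (Σ h : Fin k, Fin (t h)) =>
          (∀ h, (F.filter (fun e => e.1 = h)).card ≤ 1) ∧ F.card = i + 1) := by
      ext F
      simp only [Finset.mem_filter, Finset.mem_univ, true_and]
      rw [hfi F]
    rw [hfe, Stmt10Aux.count]
    push_cast
    rfl
end
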